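/- Coercivity implies bounded trajectory: Suppose η > 0 satisfies ηβ(3+ηβ) < 1 and f+g is coercive (i.e., (f+g)(u) → +∞ as ‖u‖ → ∞), where f : ℝⁿ → ℝ∪{+∞} is proper convex lsc and g has β-Lipschitz gradient. Let x be the unique C¹ solution of ẋ(t) + x(t) = prox_{ηf}(x(t) − η∇g(x(t))), x(0) = x₀. Then f+g is bounded below and attains its infimum, (f+g)(ẋ(T)+x(T)) ≤ (f+g)(ẋ(0)+x₀) + (1/(2η))‖ẋ(0)‖² for all T ≥ 0, and the trajectory x is bounded on [0,∞). -/

import Mathlib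

open Filter MeasureTheory Set Topology Bornology
open scoped RealInnerProductSpace


lemma stmt18_antitone {a b : ℝ} (hab : a ≤ b) {h : ℝ → ℝ} {K : ℝ} (hK : 0 ≤ K)
    (hlip : ∀ s ∈ Icc a b, ∀ t ∈ Icc a b, |h t - h s| ≤ K * |t - s|)
    {N : Set ℝ} (hN : volume N = 0)
    (hd : ∀ t ∈ Ico a b, t ∉ N → ∃ h', HasDerivAt h h' t ∧ h' ≤ 0) :
    h b ≤ h a := by
  refine le_of_forall_pos_le_add fun ε hε => ?_
  set δ : ℝ := ε / (K + 1) with hδdef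
  have hδ : 0 < δ := div_pos hε (by linarith)
  obtain ⟨U, hNU, hUopen, hUvol⟩ :=
    Set.exists_isOpen_lt_of_lt N (ENNReal.ofReal δ) (by rw [hN]; exact ENNReal.ofReal_pos.2 hδ)
  have hUtop : volume U < ⊤ := hUvol.trans_le le_top
  have hUfin : ∀ t : ℝ, volume (U ∩ Ioc a t) ≠ ⊤ := fun t =>
    (lt_of_le_of_lt (measure_mono inter_subset_left) hUtop).ne
  set m : ℝ → ℝ := fun t => (volume (U ∩ Ioc a t)).toReal with hmdef
  have hm_mono : Monotone m := by
    intro s t hst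
    exact ENNReal.toReal_mono (hUfin t)
      (measure_mono (inter_subset_inter_right U (Ioc_subset_Ioc_right hst)))
  have hm_le : ∀ s t : ℝ, s ≤ t → m t ≤ m s + (t - s) := by
    intro s t hst
    have h1 : U ∩ Ioc a t ⊆ (U ∩ Ioc a s) ∪ Ioc s t := by
      rintro z ⟨hzU, hza, hzt⟩
      rcases le_or_gt z s with hz | hz
      · exact Or.inl ⟨hzU, hza, hz⟩
      · exact Or.inr ⟨hz, hzt⟩
    calc m t ≤ (volume (U ∩ Ioc a s) + volume (Ioc s t)).toReal := by
          refine ENNReal.toReal_mono ?_ ((measure_mono h1).trans (measure_union_le _ _))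
          simp [ENNReal.add_ne_top, hUfin s, Real.volume_Ioc]
      _ = m s + (t - s) := by
          rw [ENNReal.toReal_add (hUfin s) (by simp [Real.volume_Ioc]), Real.volume_Ioc,
            ENNReal.toReal_ofReal (by linarith)]
  have hm_gain : ∀ t ∈ U, a ≤ t → ∀ᶠ z in 𝓝[>] t, m t + (z - t) ≤ m z := by
    intro t htU hat
    obtain ⟨r, hr, hball⟩ := Metric.isOpen_iff.1 hUopen t htU
    filter_upwards [Ioo_mem_nhdsGT_of_mem ⟨le_refl t, (by linarith : t < t + r)⟩] with z hz
    have hsub : Ioc t z ⊆ U := by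
      intro y hy
      apply hball
      rw [Metric.mem_ball, Real.dist_eq, abs_of_pos (by linarith [hy.1] : (0:ℝ) < y - t)]
      linarith [hy.2, hz.2]
    have hsub2 : (U ∩ Ioc a t) ∪ Ioc t z ⊆ U ∩ Ioc a z := by
      rintro y (⟨hyU, hya, hyt⟩ | hy)
      · exact ⟨hyU, hya, hyt.trans hz.1.le⟩
      · exact ⟨hsub hy, lt_of_le_of_lt hat hy.1, hy.2⟩
    have hdisj : Disjoint (U ∩ Ioc a t) (Ioc t z) :=
      Set.disjoint_left.2 (fun y hy hy2 => absurd hy.2.2 (not_le.2 hy2.1))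
    have hmeas : volume (U ∩ Ioc a t) + volume (Ioc t z) ≤ volume (U ∩ Ioc a z) := by
      rw [← measure_union hdisj measurableSet_Ioc]
      exact measure_mono hsub2
    have := ENNReal.toReal_mono (hUfin z) hmeas
    rw [ENNReal.toReal_add (hUfin t) (by simp [Real.volume_Ioc]), Real.volume_Ioc,
      ENNReal.toReal_ofReal (by linarith [hz.1.le] : (0:ℝ) ≤ z - t)] at this
    linarith [this]
  have hm_lip : Continuous m := by
    rw [Metric.continuous_iff]
    intro t ε' hε'
    refine ⟨ε', hε', fun s hs => ?_⟩
    rw [Real.dist_eq] at hs ⊢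
    rcases le_total s t with hst | hst
    · have h1 := hm_le s t hst
      have h2 := hm_mono hst
      rw [abs_lt]; constructor <;> linarith [(abs_lt.1 hs).1, (abs_lt.1 hs).2]
    · have h1 := hm_le t s hst
      have h2 := hm_mono hst
      rw [abs_lt]; constructor <;> linarith [(abs_lt.1 hs).1, (abs_lt.1 hs).2]
  have hm_a : m a = 0 := by simp [hmdef]
  have hm_nonneg : ∀ t, 0 ≤ m t := fun t => ENNReal.toReal_nonneg
  -- continuity of h on Icc
  have hh_cont : ContinuousOn h (Icc a b) := by
    intro t ht
    rw [Metric.continuousWithinAt_iff]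
    intro ε' hε'
    refine ⟨ε' / (K + 1), by positivity, fun s hs hd' => ?_⟩
    rw [Real.dist_eq] at hd' ⊢
    calc |h s - h t| ≤ K * |s - t| := hlip t ht s hs
      _ ≤ K * (ε' / (K+1)) := by apply mul_le_mul_of_nonneg_left hd'.le hK
      _ < ε' := by rw [mul_div_assoc', div_lt_iff₀ (by linarith : (0:ℝ) < K+1)]; nlinarith
  set F : ℝ → ℝ := fun t => h t - K * m t with hFdef
  have key : F b ≤ F a := by
    have := image_le_of_liminf_slope_right_le_deriv_boundary
      (f := F) (a := a) (b := b) (B := fun _ => F a) (B' := fun _ => 0)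
      (hh_cont.sub ((continuous_const.mul hm_lip).continuousOn))
      le_rfl continuousOn_const (fun x _ => hasDerivWithinAt_const x _ (F a) |>.congr_deriv rfl)
      ?_
    · exact this (right_mem_Icc.2 hab)
    · intro t ht r hr
      have htb : t < b := ht.2
      by_cases htN : t ∈ U
      · -- bad point: use the compensator
        apply Eventually.frequently
        filter_upwards [hm_gain t htN ht.1, Ioo_mem_nhdsGT_of_mem ⟨le_refl t, htb⟩] with z hz hz2
        have hzt : 0 < z - t := by linarith [hz2.1]
        have hslope : slope F t z = ((h z - h t) - K * (m z - m t)) / (z - t) := by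
          rw [slope_def_field, hFdef]; ring_nf
        rw [hslope]
        have h1 : h z - h t ≤ K * (z - t) := by
          have := hlip t (Ico_subset_Icc_self ht) z ⟨by linarith [ht.1, hz2.1], hz2.2.le⟩
          calc h z - h t ≤ |h z - h t| := le_abs_self _
            _ ≤ K * |z - t| := this
            _ = K * (z - t) := by rw [abs_of_pos hzt]
        have h2 : z - t ≤ m z - m t := by linarith [hz]
        calc ((h z - h t) - K * (m z - m t)) / (z - t) ≤ 0 := by
              apply div_nonpos_of_nonpos_of_nonneg _ hzt.le
              nlinarith
          _ < r := by simpa using hr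
      · -- good point: use the derivative
        obtain ⟨h', hderiv, hle⟩ := hd t ht (fun hmem => htN (hNU hmem))
        apply Eventually.frequently
        have htend : Tendsto (slope h t) (𝓝[>] t) (𝓝 h') :=
          ((hasDerivAt_iff_tendsto_slope.1 hderiv).mono_left
            (nhdsWithin_mono t (fun z hz => ne_of_gt hz)))
        have hev : ∀ᶠ z in 𝓝[>] t, slope h t z < r :=
          htend.eventually_lt_const (lt_of_le_of_lt hle (by simpa using hr))
        filter_upwards [hev, self_mem_nhdsWithin] with z hz hz2
        have hzt : 0 < z - t := by simp only [mem_Ioi] at hz2; linarith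
        have hslope : slope F t z = slope h t z - K * ((m z - m t)/(z - t)) := by
          rw [slope_def_field, slope_def_field, hFdef]; ring_nf
        rw [hslope]
        have : 0 ≤ (m z - m t) / (z - t) :=
          div_nonneg (by linarith [hm_mono (by linarith : t ≤ z)]) hzt.le
        nlinarith
  -- conclude
  have hmb : m b ≤ δ := by
    have h1 : volume (U ∩ Ioc a b) ≤ ENNReal.ofReal δ :=
      (measure_mono inter_subset_left).trans hUvol.le
    calc m b ≤ (ENNReal.ofReal δ).toReal := ENNReal.toReal_mono (by simp) h1
      _ = δ := ENNReal.toReal_ofReal hδ.le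
  have : h b ≤ h a + K * m b := by simp only [hFdef] at key; linarith [hm_a ▸ key]
  calc h b ≤ h a + K * δ := by nlinarith [mul_le_mul_of_nonneg_left hmb hK]
    _ ≤ h a + ε := by
      have hKδ : K * δ ≤ ε := by
        rw [hδdef, mul_div_assoc', div_le_iff₀ (by linarith : (0:ℝ) < K+1)]; nlinarith
      linarith


set_option maxHeartbeats 1000000 in
/-- Coercivity implies bounded trajectory: if `f+g` is coercive and
`ηβ(3+ηβ) < 1`, then `f+g` is bounded below and attains its infimum, the energy
estimate `(f+g)(ẋ(T)+x(T)) ≤ (f+g)(ẋ(0)+x₀) + (1/(2η))‖ẋ(0)‖²` holds for all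
`T ≥ 0`, and the trajectory of `ẋ(t) + x(t) = prox_{ηf}(x(t) − η∇g(x(t)))` is
bounded on `[0,∞)`. -/
theorem stmt18 (n : ℕ)
    (f : EuclideanSpace ℝ (Fin n) → ℝ)
    (hf_cvx : ConvexOn ℝ Set.univ f) (hf_lsc : LowerSemicontinuous f)
    (g : EuclideanSpace ℝ (Fin n) → ℝ) (g' : EuclideanSpace ℝ (Fin n) → EuclideanSpace ℝ (Fin n))
    (hg_diff : ∀ z, HasGradientAt g (g' z) z)
    (β : ℝ) (hβ : 0 ≤ β)
    (hg_lip : ∀ a b, ‖g' a - g' b‖ ≤ β * ‖a - b‖)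
    (hcoercive : Tendsto (fun u => f u + g u) (cobounded (EuclideanSpace ℝ (Fin n))) atTop)
    (η : ℝ) (hη : 0 < η) (hstep : η * β * (3 + η * β) < 1)
    (x xd xdd : ℝ → EuclideanSpace ℝ (Fin n)) (x₀ : EuclideanSpace ℝ (Fin n))
    (hx0 : x 0 = x₀)
    (hx : ∀ t ≥ (0:ℝ), HasDerivAt x (xd t) t) (hxd_cont : Continuous xd)
    (hprox : ∀ t ≥ (0:ℝ), ∀ y,
      f (xd t + x t) + ⟪-((1/η) • xd t) - g' (x t), y - (xd t + x t)⟫ ≤ f y)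
    (hxdd : ∀ᵐ t ∂(volume.restrict (Ici (0:ℝ))),
      HasDerivAt xd (xdd t) t ∧ ‖xdd t‖ ≤ (2 + η * β) * ‖xd t‖)
    (hchain_f : ∀ᵐ t ∂(volume.restrict (Ici (0:ℝ))),
      HasDerivAt (fun s => f (xd s + x s))
        ⟪-((1/η) • xd t) - g' (x t), xdd t + xd t⟫ t) :
    (∃ umin, ∀ u, f umin + g umin ≤ f u + g u) ∧
    (∀ T ≥ (0:ℝ), f (xd T + x T) + g (xd T + x T) ≤
      f (xd 0 + x₀) + g (xd 0 + x₀) + (1/(2*η)) * ‖xd 0‖ ^ 2) ∧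
    ∃ C : ℝ, ∀ t ≥ (0:ℝ), ‖x t‖ ≤ C := by
  -- basic continuity facts
  have hg'_cont : Continuous g' := by
    have : LipschitzWith β.toNNReal g' := by
      apply LipschitzWith.of_dist_le_mul
      intro a b
      rw [dist_eq_norm, dist_eq_norm, Real.coe_toNNReal β hβ]
      exact hg_lip a b
    exact this.continuous
  have hg_cont : Continuous g :=
    continuous_iff_continuousAt.2 fun z => (hg_diff z).hasFDerivAt.continuousAt
  have hf_cont : Continuous f := by
    have h1 := hf_cvx.continuousOn_interior
    rw [interior_univ] at h1
    exact continuousOn_univ.mp h1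
  -- Part 1 : existence of a minimizer
  have part1 : ∃ umin, ∀ u, f umin + g umin ≤ f u + g u := by
    apply (hf_cont.add hg_cont).exists_forall_le
    rwa [← Metric.cobounded_eq_cocompact]
  -- notation
  set u : ℝ → EuclideanSpace ℝ (Fin n) := fun r => xd r + x r with hu
  set w : ℝ → EuclideanSpace ℝ (Fin n) := fun r => -((1/η) • xd r) - g' (x r) with hw
  have hx_cont : ContinuousOn x (Ici 0) := fun t ht => (hx t ht).continuousAt.continuousWithinAt
  have hu_cont : ContinuousOn u (Ici 0) := (hxd_cont.continuousOn).add hx_cont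
  have hw_cont : ContinuousOn w (Ici 0) :=
    (((continuous_const (y := 1/η)).smul hxd_cont).neg.continuousOn).sub (hg'_cont.comp_continuousOn hx_cont)
  -- nonexpansiveness of the prox map along the trajectory
  have hulip : ∀ s, 0 ≤ s → ∀ t, 0 ≤ t → ‖u t - u s‖ ≤ (1 + η * β) * ‖x t - x s‖ := by
    intro s hs t ht
    have h1 := hprox t ht (u s)
    have h2 := hprox s hs (u t)
    set d := u t - u s with hd
    set Δ := x t - x s with hΔ
    have e1 : ⟪w t, u s - u t⟫ = -⟪w t, d⟫ := by rw [hd, ← neg_sub, inner_neg_right]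
    have hsum : ⟪w s - w t, d⟫ ≤ 0 := by
      rw [inner_sub_left]; simp only [hd] at *; linarith [e1]
    have hwdiff : w s - w t = (1/η) • (xd t - xd s) + (g' (x t) - g' (x s)) := by
      simp only [hw]; module
    have hxds : xd t - xd s = d - Δ := by simp only [hd, hΔ, hu]; abel
    have hinner : (1/η) * ⟪d - Δ, d⟫ + ⟪g' (x t) - g' (x s), d⟫ ≤ 0 := by
      rw [← real_inner_smul_left, ← inner_add_left, ← hxds, ← hwdiff]; exact hsum
    have hdd : ⟪d - Δ, d⟫ = ⟪d, d⟫ - ⟪Δ, d⟫ := inner_sub_left d Δ d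
    have hnn : ⟪d, d⟫ = ‖d‖^2 := real_inner_self_eq_norm_sq d
    have hcs1 : ⟪Δ, d⟫ ≤ ‖Δ‖ * ‖d‖ := real_inner_le_norm Δ d
    have hcs2 : -⟪g' (x t) - g' (x s), d⟫ ≤ β * ‖Δ‖ * ‖d‖ := by
      calc -⟪g' (x t) - g' (x s), d⟫ ≤ |⟪g' (x t) - g' (x s), d⟫| := neg_le_abs _
        _ ≤ ‖g' (x t) - g' (x s)‖ * ‖d‖ := abs_real_inner_le_norm _ _
        _ ≤ (β * ‖x t - x s‖) * ‖d‖ :=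
            mul_le_mul_of_nonneg_right (hg_lip _ _) (norm_nonneg _)
        _ = β * ‖Δ‖ * ‖d‖ := by rw [hΔ]
    have hkey : ‖d‖^2 ≤ (1 + η * β) * ‖Δ‖ * ‖d‖ := by
      have h3 : (1/η) * (‖d‖^2 - ⟪Δ, d⟫) ≤ β * ‖Δ‖ * ‖d‖ := by
        rw [← hnn, ← hdd]; linarith
      have h4 : ‖d‖^2 - ⟪Δ, d⟫ ≤ η * (β * ‖Δ‖ * ‖d‖) := by
        rw [← mul_le_mul_iff_of_pos_left (by positivity : (0:ℝ) < 1/η)]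
        calc (1/η) * (‖d‖^2 - ⟪Δ, d⟫) ≤ β * ‖Δ‖ * ‖d‖ := h3
          _ = (1/η) * (η * (β * ‖Δ‖ * ‖d‖)) := by field_simp
      nlinarith
    rcases eq_or_lt_of_le (norm_nonneg d) with h0 | h0
    · rw [← h0]; positivity
    · calc ‖d‖ = ‖d‖^2 / ‖d‖ := by field_simp [pow_two]
        _ ≤ ((1 + η * β) * ‖Δ‖ * ‖d‖) / ‖d‖ := by gcongr
        _ = (1 + η * β) * ‖Δ‖ := by field_simp
  -- one-sided Lipschitz bound for f ∘ u
  have hfu : ∀ s, 0 ≤ s → ∀ t, 0 ≤ t → f (u t) - f (u s) ≤ ‖w t‖ * ‖u t - u s‖ := by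
    intro s hs t ht
    have h1 := hprox t ht (u s)
    have h2 : f (u t) - f (u s) ≤ -⟪w t, u s - u t⟫ := by linarith
    calc f (u t) - f (u s) ≤ -⟪w t, u s - u t⟫ := h2
      _ ≤ |⟪w t, u s - u t⟫| := neg_le_abs _
      _ ≤ ‖w t‖ * ‖u s - u t‖ := abs_real_inner_le_norm _ _
      _ = ‖w t‖ * ‖u t - u s‖ := by rw [norm_sub_rev (u s) (u t)]
  -- the exceptional null set
  have hae := hxdd.and hchain_f
  rw [ae_restrict_eq measurableSet_Ici, eventually_inf_principal] at hae
  set P : ℝ → Prop := fun t =>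
    (HasDerivAt xd (xdd t) t ∧ ‖xdd t‖ ≤ (2 + η * β) * ‖xd t‖) ∧
      HasDerivAt (fun s => f (u s)) ⟪w t, xdd t + xd t⟫ t with hP
  set N : Set ℝ := {t | ¬ (t ∈ Ici (0:ℝ) → P t)} with hN
  have hNvol : volume N = 0 := by rw [hN, ← ae_iff]; exact hae
  -- the energy function
  set E : ℝ → ℝ := fun t => f (u t) + g (u t) + (1/(2*η)) * ⟪xd t, xd t⟫ with hE
  -- Part 2 : energy decrease
  have part2 : ∀ T, 0 ≤ T → E T ≤ E 0 := by
    intro T hT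
    -- bounds on the compact interval [0, T]
    obtain ⟨M₀, hM₀⟩ := isCompact_Icc.exists_bound_of_continuousOn
      (hxd_cont.continuousOn : ContinuousOn xd (Icc 0 T))
    set M := max M₀ 0 with hM
    have hMxd : ∀ r ∈ Icc (0:ℝ) T, ‖xd r‖ ≤ M := fun r hr => (hM₀ r hr).trans (le_max_left _ _)
    have hM0 : 0 ≤ M := le_max_right _ _
    obtain ⟨W₀, hW₀⟩ := isCompact_Icc.exists_bound_of_continuousOn
      (hw_cont.mono (Icc_subset_Ici_self : Icc (0:ℝ) T ⊆ Ici 0))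
    set W := max W₀ 0 with hW
    have hWw : ∀ r ∈ Icc (0:ℝ) T, ‖w r‖ ≤ W := fun r hr => (hW₀ r hr).trans (le_max_left _ _)
    obtain ⟨R₀, hR₀⟩ := isCompact_Icc.exists_bound_of_continuousOn
      (hu_cont.mono (Icc_subset_Ici_self : Icc (0:ℝ) T ⊆ Ici 0))
    set R := max R₀ 0 with hR
    have hRu : ∀ r ∈ Icc (0:ℝ) T, ‖u r‖ ≤ R := fun r hr => (hR₀ r hr).trans (le_max_left _ _)
    have hR0 : 0 ≤ R := le_max_right _ _
    set G : ℝ := ‖g' 0‖ + β * R with hG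
    -- Lipschitz bound for x on [0,T]
    have hxlip : ∀ s ∈ Icc (0:ℝ) T, ∀ t ∈ Icc (0:ℝ) T, ‖x t - x s‖ ≤ M * |t - s| := by
      intro s hs t ht
      have := (convex_Icc (0:ℝ) T).norm_image_sub_le_of_norm_hasDerivWithin_le
        (fun r hr => (hx r hr.1).hasDerivWithinAt) hMxd hs ht
      rwa [Real.norm_eq_abs] at this
    -- Lipschitz bound for g on the closed ball of radius R
    have hglip : ∀ a ∈ Metric.closedBall (0 : EuclideanSpace ℝ (Fin n)) R,
        ∀ b ∈ Metric.closedBall (0 : EuclideanSpace ℝ (Fin n)) R, ‖g b - g a‖ ≤ G * ‖b - a‖ := by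
      intro a ha b hb
      refine Convex.norm_image_sub_le_of_norm_hasFDerivWithin_le
        (f := g) (s := Metric.closedBall (0 : EuclideanSpace ℝ (Fin n)) R)
        (f' := fun z => InnerProductSpace.toDual ℝ _ (g' z))
        (fun z _ => (hg_diff z).hasFDerivAt.hasFDerivWithinAt) (fun z hz => ?_)
        (convex_closedBall _ _) ha hb
      rw [LinearIsometryEquiv.norm_map]
      calc ‖g' z‖ ≤ ‖g' 0‖ + ‖g' z - g' 0‖ := by
            have := norm_sub_norm_le (g' z) (g' 0); linarith [norm_sub_norm_le (g' z) (g' 0)]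
        _ ≤ ‖g' 0‖ + β * ‖z - 0‖ := by linarith [hg_lip z 0]
        _ ≤ G := by
            rw [hG, sub_zero]
            have hzR : ‖z‖ ≤ R := by simpa [Metric.mem_closedBall, dist_eq_norm] using hz
            nlinarith
    -- E is Lipschitz on [0,T]
    set K : ℝ := (W + G) * ((1 + η*β) * M) + (1/(2*η)) * (2*M) * ((2 + η*β) * M) with hK
    have hK0 : 0 ≤ K := by positivity
    have hElip : ∀ s ∈ Icc (0:ℝ) T, ∀ t ∈ Icc (0:ℝ) T, |E t - E s| ≤ K * |t - s| := by
      intro s hs t ht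
      have hus : ‖u t - u s‖ ≤ (1 + η*β) * (M * |t - s|) := by
        calc ‖u t - u s‖ ≤ (1 + η*β) * ‖x t - x s‖ := hulip s hs.1 t ht.1
          _ ≤ (1 + η*β) * (M * |t - s|) := by
              apply mul_le_mul_of_nonneg_left (hxlip s hs t ht) (by positivity)
      have hxds : ‖xd t - xd s‖ ≤ (2 + η*β) * M * |t - s| := by
        have : xd t - xd s = (u t - u s) - (x t - x s) := by simp only [hu]; abel
        rw [this]
        calc ‖(u t - u s) - (x t - x s)‖ ≤ ‖u t - u s‖ + ‖x t - x s‖ := norm_sub_le _ _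
          _ ≤ (1 + η*β) * (M * |t - s|) + M * |t - s| := add_le_add hus (hxlip s hs t ht)
          _ = (2 + η*β) * M * |t - s| := by ring
      have hW0 : 0 ≤ W := le_max_right _ _
      have h1 : |f (u t) - f (u s)| ≤ W * ((1 + η*β) * (M * |t - s|)) := by
        have hb1 : f (u t) - f (u s) ≤ W * ((1 + η*β) * (M * |t - s|)) := by
          calc f (u t) - f (u s) ≤ ‖w t‖ * ‖u t - u s‖ := hfu s hs.1 t ht.1
            _ ≤ W * ((1 + η*β) * (M * |t - s|)) :=
                mul_le_mul (hWw t ht) hus (norm_nonneg _) hW0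
        have hb2 : f (u s) - f (u t) ≤ W * ((1 + η*β) * (M * |t - s|)) := by
          have h4 : ‖u s - u t‖ = ‖u t - u s‖ := norm_sub_rev _ _
          calc f (u s) - f (u t) ≤ ‖w s‖ * ‖u s - u t‖ := hfu t ht.1 s hs.1
            _ = ‖w s‖ * ‖u t - u s‖ := by rw [h4]
            _ ≤ W * ((1 + η*β) * (M * |t - s|)) :=
                mul_le_mul (hWw s hs) hus (norm_nonneg _) hW0
        rw [abs_le]; constructor <;> linarith
      have h2 : |g (u t) - g (u s)| ≤ G * ((1 + η*β) * (M * |t - s|)) := by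
        have hmem : ∀ r ∈ Icc (0:ℝ) T, u r ∈ Metric.closedBall (0 : EuclideanSpace ℝ (Fin n)) R :=
          fun r hr => by simpa [Metric.mem_closedBall, dist_eq_norm] using hRu r hr
        have := hglip (u s) (hmem s hs) (u t) (hmem t ht)
        rw [Real.norm_eq_abs] at this
        refine this.trans ?_
        apply mul_le_mul_of_nonneg_left hus
        have : (0:ℝ) ≤ ‖g' 0‖ + β * R := by positivity
        simpa [hG] using this
      have h3 : |⟪xd t, xd t⟫ - ⟪xd s, xd s⟫| ≤ (2*M) * ((2 + η*β) * M * |t - s|) := by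
        have hsplit : ⟪xd t, xd t⟫ - ⟪xd s, xd s⟫ = ⟪xd t - xd s, xd t⟫ + ⟪xd s, xd t - xd s⟫ := by
          rw [inner_sub_left, inner_sub_right]; ring
        rw [hsplit]
        calc |⟪xd t - xd s, xd t⟫ + ⟪xd s, xd t - xd s⟫|
            ≤ |⟪xd t - xd s, xd t⟫| + |⟪xd s, xd t - xd s⟫| := abs_add_le _ _
          _ ≤ ‖xd t - xd s‖ * ‖xd t‖ + ‖xd s‖ * ‖xd t - xd s‖ :=
              add_le_add (abs_real_inner_le_norm _ _) (abs_real_inner_le_norm _ _)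
          _ ≤ (2*M) * ((2 + η*β) * M * |t - s|) := by
              nlinarith [hMxd t ht, hMxd s hs, hxds, norm_nonneg (xd t - xd s),
                norm_nonneg (xd t), norm_nonneg (xd s), abs_nonneg (t - s)]
      have hEexp : E t - E s = (f (u t) - f (u s)) + (g (u t) - g (u s))
          + (1/(2*η)) * (⟪xd t, xd t⟫ - ⟪xd s, xd s⟫) := by simp only [hE]; ring
      rw [hEexp, hK]
      have h2η : 0 < 1/(2*η) := by positivity
      calc |(f (u t) - f (u s)) + (g (u t) - g (u s))
          + (1/(2*η)) * (⟪xd t, xd t⟫ - ⟪xd s, xd s⟫)|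
          ≤ |f (u t) - f (u s)| + |g (u t) - g (u s)|
            + (1/(2*η)) * |⟪xd t, xd t⟫ - ⟪xd s, xd s⟫| := by
            calc _ ≤ |(f (u t) - f (u s)) + (g (u t) - g (u s))|
                + |(1/(2*η)) * (⟪xd t, xd t⟫ - ⟪xd s, xd s⟫)| := abs_add_le _ _
              _ ≤ _ := by
                  rw [abs_mul, abs_of_pos h2η]
                  exact add_le_add_left (abs_add_le _ _) _
        _ ≤ W * ((1 + η*β) * (M * |t - s|)) + G * ((1 + η*β) * (M * |t - s|))
              + (1/(2*η)) * (2*M * ((2 + η*β) * M * |t - s|)) := by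
            have h9 := mul_le_mul_of_nonneg_left h3 h2η.le
            exact add_le_add (add_le_add h1 h2) h9
        _ = ((W + G) * ((1 + η*β) * M) + (1/(2*η)) * (2*M) * ((2 + η*β) * M)) * |t - s| := by
            ring
    -- the a.e. derivative of E is nonpositive
    have hderiv : ∀ t ∈ Ico (0:ℝ) T, t ∉ N → ∃ e', HasDerivAt E e' t ∧ e' ≤ 0 := by
      intro t ht htN
      have hPt : P t := by
        rw [hN, mem_setOf_eq, not_not] at htN
        exact htN ht.1
      obtain ⟨⟨hxdD, hxddb⟩, hfD⟩ := hPt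
      have hu' : HasDerivAt u (xdd t + xd t) t := hxdD.add (hx t ht.1)
      have hgD : HasDerivAt (fun s => g (u s)) ⟪g' (u t), xdd t + xd t⟫ t := by
        have h1 := (hg_diff (u t)).hasFDerivAt.comp_hasDerivAt t hu'
        simp only [InnerProductSpace.toDual_apply_apply] at h1
        exact h1
      have hqD : HasDerivAt (fun s => ⟪xd s, xd s⟫) (⟪xd t, xdd t⟫ + ⟪xdd t, xd t⟫) t :=
        hxdD.inner ℝ hxdD
      refine ⟨⟪w t, xdd t + xd t⟫ + ⟪g' (u t), xdd t + xd t⟫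
        + (1/(2*η)) * (⟪xd t, xdd t⟫ + ⟪xdd t, xd t⟫), (hfD.add hgD).add (hqD.const_mul _), ?_⟩
      -- sign computation
      set v := xdd t + xd t with hv
      have e1 : ⟪w t, v⟫ = -((1/η) * ⟪xd t, v⟫) - ⟪g' (x t), v⟫ := by
        simp only [hw, inner_sub_left, inner_neg_left, real_inner_smul_left]
      have e2 : ⟪g' (u t), v⟫ - ⟪g' (x t), v⟫ = ⟪g' (u t) - g' (x t), v⟫ := by
        rw [inner_sub_left]
      have e3 : ⟪xd t, v⟫ = ⟪xd t, xdd t⟫ + ⟪xd t, xd t⟫ := by rw [hv, inner_add_right]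
      have e4 : ⟪xdd t, xd t⟫ = ⟪xd t, xdd t⟫ := real_inner_comm _ _
      have e5 : ⟪xd t, xd t⟫ = ‖xd t‖^2 := real_inner_self_eq_norm_sq _
      have hp : ⟪g' (u t) - g' (x t), v⟫ ≤ β * (3 + η*β) * ‖xd t‖^2 := by
        have hux : u t - x t = xd t := by simp only [hu]; abel
        have hb1 : ‖g' (u t) - g' (x t)‖ ≤ β * ‖xd t‖ := by
          have := hg_lip (u t) (x t); rwa [hux] at this
        have hb2 : ‖v‖ ≤ (3 + η*β) * ‖xd t‖ := by
          calc ‖v‖ ≤ ‖xdd t‖ + ‖xd t‖ := norm_add_le _ _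
            _ ≤ (2 + η*β) * ‖xd t‖ + ‖xd t‖ := by linarith
            _ = (3 + η*β) * ‖xd t‖ := by ring
        calc ⟪g' (u t) - g' (x t), v⟫ ≤ |⟪g' (u t) - g' (x t), v⟫| := le_abs_self _
          _ ≤ ‖g' (u t) - g' (x t)‖ * ‖v‖ := abs_real_inner_le_norm _ _
          _ ≤ (β * ‖xd t‖) * ((3 + η*β) * ‖xd t‖) := by
              apply mul_le_mul hb1 hb2 (norm_nonneg _) (by positivity)
          _ = β * (3 + η*β) * ‖xd t‖^2 := by ring
      have hstep' : β * (3 + η*β) * ‖xd t‖^2 ≤ (1/η) * ‖xd t‖^2 := by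
        have h5 : β * (3 + η*β) ≤ 1/η := by
          rw [le_div_iff₀ hη]; nlinarith
        apply mul_le_mul_of_nonneg_right h5 (sq_nonneg _)
      have hfield : (1/(2*η)) * (2 : ℝ) = 1/η := by field_simp
      calc ⟪w t, v⟫ + ⟪g' (u t), v⟫ + (1/(2*η)) * (⟪xd t, xdd t⟫ + ⟪xdd t, xd t⟫)
          = ⟪g' (u t) - g' (x t), v⟫ - (1/η) * ‖xd t‖^2
            + ((1/(2*η)) * 2 - (1/η)) * ⟪xd t, xdd t⟫ := by
            rw [e1, e3, e4, e5, ← e2]; ring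
        _ = ⟪g' (u t) - g' (x t), v⟫ - (1/η) * ‖xd t‖^2 := by rw [hfield]; ring
        _ ≤ 0 := by linarith
    -- conclude by the antitone lemma
    exact stmt18_antitone hT hK0 hElip hNvol hderiv
  -- translate part 2 into the required form
  have part2' : ∀ T, 0 ≤ T → f (u T) + g (u T) ≤
      f (xd 0 + x₀) + g (xd 0 + x₀) + (1/(2*η)) * ‖xd 0‖ ^ 2 := by
    intro T hT
    have h1 := part2 T hT
    have h2 : 0 ≤ (1/(2*η)) * ⟪xd T, xd T⟫ :=
      mul_nonneg (by positivity) real_inner_self_nonneg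
    have h4 : (⟪xd 0, xd 0⟫ : ℝ) = ‖xd 0‖^2 := real_inner_self_eq_norm_sq _
    simp only [hE] at h1
    have h6 : f (u 0) + g (u 0) + 1/(2*η) * (⟪xd 0, xd 0⟫ : ℝ)
        = f (xd 0 + x₀) + g (xd 0 + x₀) + (1/(2*η)) * ‖xd 0‖ ^ 2 := by
      rw [h4]; simp only [hu, hx0]
    rw [h6] at h1
    linarith
  -- Part 3 : boundedness of the trajectory
  have part3 : ∃ C : ℝ, ∀ t ≥ (0:ℝ), ‖x t‖ ≤ C := by
    set c₀ : ℝ := f (xd 0 + x₀) + g (xd 0 + x₀) + (1/(2*η)) * ‖xd 0‖ ^ 2 with hc₀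
    have hev : ∀ᶠ z in cobounded (EuclideanSpace ℝ (Fin n)), c₀ + 1 ≤ f z + g z :=
      hcoercive.eventually (eventually_ge_atTop (c₀ + 1))
    have hbdd : IsBounded {z : EuclideanSpace ℝ (Fin n) | ¬ (c₀ + 1 ≤ f z + g z)} := by
      have h7 : IsCobounded {z : EuclideanSpace ℝ (Fin n) | c₀ + 1 ≤ f z + g z} :=
        isCobounded_def.2 hev
      have h8 := h7.compl
      rwa [compl_setOf] at h8
    obtain ⟨R, hRsub⟩ := hbdd.subset_closedBall 0
    have huR : ∀ t, 0 ≤ t → ‖u t‖ ≤ R := by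
      intro t ht
      have h1 : ¬ (c₀ + 1 ≤ f (u t) + g (u t)) := by
        push_neg
        have := part2' t ht
        linarith
      have := hRsub h1
      simpa [Metric.mem_closedBall, dist_eq_norm] using this
    have hR0 : 0 ≤ R := (norm_nonneg (u 0)).trans (huR 0 le_rfl)
    refine ⟨‖x₀‖ + R, fun T hT => ?_⟩
    -- integrate y' = exp t • u t where y t = exp t • x t
    set y : ℝ → EuclideanSpace ℝ (Fin n) := fun t => Real.exp t • x t with hy
    have hyD : ∀ t ∈ Icc (0:ℝ) T, HasDerivAt y (Real.exp t • u t) t := by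
      intro t ht
      have h1 := (Real.hasDerivAt_exp t).smul (hx t ht.1)
      have h2 : Real.exp t • u t = Real.exp t • xd t + Real.exp t • x t := by
        simp only [hu, smul_add]
      rw [hy, h2]
      exact h1
    have hint : IntervalIntegrable (fun t => Real.exp t • u t) volume 0 T := by
      apply ContinuousOn.intervalIntegrable
      rw [uIcc_of_le hT]
      exact (Real.continuous_exp.continuousOn).smul (hu_cont.mono Icc_subset_Ici_self)
    have hftc : ∫ t in (0:ℝ)..T, Real.exp t • u t = y T - y 0 := by
      apply intervalIntegral.integral_eq_sub_of_hasDerivAt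
      · intro t ht; rw [uIcc_of_le hT] at ht; exact hyD t ht
      · exact hint
    have hnorm : ‖y T - y 0‖ ≤ R * (Real.exp T - 1) := by
      rw [← hftc]
      calc ‖∫ t in (0:ℝ)..T, Real.exp t • u t‖
          ≤ ∫ t in (0:ℝ)..T, ‖Real.exp t • u t‖ :=
            intervalIntegral.norm_integral_le_integral_norm hT
        _ ≤ ∫ t in (0:ℝ)..T, R * Real.exp t := by
            apply intervalIntegral.integral_mono_on hT (hint.norm) ?_ ?_
            · apply ContinuousOn.intervalIntegrable
              rw [uIcc_of_le hT]
              exact continuousOn_const.mul Real.continuous_exp.continuousOn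
            · intro t ht
              rw [norm_smul, Real.norm_eq_abs, abs_of_pos (Real.exp_pos t)]
              rw [mul_comm (R : ℝ) (Real.exp t)]
              exact mul_le_mul_of_nonneg_left (huR t ht.1) (Real.exp_pos t).le
        _ = R * (Real.exp T - 1) := by
            rw [intervalIntegral.integral_const_mul, integral_exp, Real.exp_zero]
    have hyT : ‖y T‖ ≤ ‖x₀‖ + R * Real.exp T := by
      have h0 : y 0 = x₀ := by simp [hy, hx0]
      have h8 : ‖y T‖ - ‖y 0‖ ≤ ‖y T - y 0‖ := norm_sub_norm_le _ _
      have h9 : ‖y 0‖ = ‖x₀‖ := by rw [h0]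
      have h10 : R * (Real.exp T - 1) ≤ R * Real.exp T := by nlinarith [hR0]
      linarith
    have hyTx : ‖y T‖ = Real.exp T * ‖x T‖ := by
      rw [hy]; rw [norm_smul, Real.norm_eq_abs, abs_of_pos (Real.exp_pos T)]
    have hexp1 : 1 ≤ Real.exp T := Real.one_le_exp hT
    have hxn : 0 ≤ ‖x₀‖ := norm_nonneg _
    nlinarith [hyTx ▸ hyT, Real.exp_pos T, norm_nonneg (x T)]
  exact ⟨part1, fun T hT => part2' T hT, part3⟩
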